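/- Let F be a field, Y and Z finite disjoint variable sets, r ≥ 1 an integer, and W_1,…,W_r pairwise disjoint subsets of Y ∪ Z. For each i ∈ {1,…,r} let L_i ∈ F[W_i] be a polynomial of total degree at most 1, and let f = L_1 ⋯ L_r, which is a multilinear polynomial in F[Y ∪ Z]. Then rank(M_{(Y,Z)}(f)) ≤ 2^r. -/

import Mathlib

open MvPolynomial

/-- A polynomial is multilinear if its degree in each variable is at most `1`. -/
def IsMultilinearPoly {F V : Type} [CommSemiring F] (p : MvPolynomial V F) : Prop :=
  ∀ v, p.degreeOf v ≤ 1

/-- The partial derivative matrix `M_{(Y,Z)}(g)`: rows indexed by subsets `S ⊆ Y`,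
columns by subsets `T ⊆ Z`, with `(S,T)` entry the coefficient in `g` of the monomial
`∏_{y∈S} y · ∏_{z∈T} z`. (Left summands of `V ⊕ W` are the `Y`-side variables,
right summands the `Z`-side variables.) -/
noncomputable def pdMatrix (F : Type) [CommSemiring F] {V W : Type}
    (Y : Finset V) (Z : Finset W) (g : MvPolynomial (V ⊕ W) F) :
    Matrix {S // S ∈ Y.powerset} {T // T ∈ Z.powerset} F :=
  fun S T => MvPolynomial.coeff
    ((S.1.sum fun y => Finsupp.single (Sum.inl y) 1) +
     (T.1.sum fun z => Finsupp.single (Sum.inr z) 1)) g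

section Aux
variable {F : Type} [Field F] {V W : Type}

lemma coeff_mul_split (g h : MvPolynomial (V ⊕ W) F)
    (hg : ∀ m ∈ g.support, (↑m.support : Set (V ⊕ W)) ⊆ Set.range Sum.inl)
    (hh : ∀ m ∈ h.support, (↑m.support : Set (V ⊕ W)) ⊆ Set.range Sum.inr)
    (a b : (V ⊕ W) →₀ ℕ)
    (ha : (↑a.support : Set (V ⊕ W)) ⊆ Set.range Sum.inl)
    (hb : (↑b.support : Set (V ⊕ W)) ⊆ Set.range Sum.inr) :
    coeff (a + b) (g * h) = coeff a g * coeff b h := by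
  classical
  rw [coeff_mul]
  apply Finset.sum_eq_single_of_mem (a, b)
  · rw [Finset.HasAntidiagonal.mem_antidiagonal]
  · rintro ⟨c, d⟩ hcd hne
    rw [Finset.HasAntidiagonal.mem_antidiagonal] at hcd
    by_contra hzero
    have hc : coeff c g ≠ 0 := fun h0 => hzero (by simp [h0])
    have hd : coeff d h ≠ 0 := fun h0 => hzero (by simp [h0])
    have hcs := hg c (mem_support_iff.2 hc)
    have hds := hh d (mem_support_iff.2 hd)
    apply hne
    have key : ∀ v, c v = a v ∧ d v = b v := by
      intro v
      have hsum : c v + d v = a v + b v := by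
        have := congrArg (fun m : (V ⊕ W) →₀ ℕ => m v) hcd
        simpa using this
      rcases v with y | z
      · have hd0 : d (Sum.inl y) = 0 := by
          by_contra h0
          rcases hds (Finset.mem_coe.2 (Finsupp.mem_support_iff.2 h0)) with ⟨w, hw⟩
          cases hw
        have hb0 : b (Sum.inl y) = 0 := by
          by_contra h0
          rcases hb (Finset.mem_coe.2 (Finsupp.mem_support_iff.2 h0)) with ⟨w, hw⟩
          cases hw
        omega
      · have hc0 : c (Sum.inr z) = 0 := by
          by_contra h0
          rcases hcs (Finset.mem_coe.2 (Finsupp.mem_support_iff.2 h0)) with ⟨w, hw⟩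
          cases hw
        have ha0 : a (Sum.inr z) = 0 := by
          by_contra h0
          rcases ha (Finset.mem_coe.2 (Finsupp.mem_support_iff.2 h0)) with ⟨w, hw⟩
          cases hw
        omega
    exact Prod.ext (Finsupp.ext fun v => (key v).1) (Finsupp.ext fun v => (key v).2)

lemma split_deg_one (p : MvPolynomial (V ⊕ W) F) (hp : p.totalDegree ≤ 1) :
    ∃ g h : MvPolynomial (V ⊕ W) F, p = g + h ∧
      (∀ m ∈ g.support, (↑m.support : Set (V ⊕ W)) ⊆ Set.range Sum.inl) ∧
      (∀ m ∈ h.support, (↑m.support : Set (V ⊕ W)) ⊆ Set.range Sum.inr) := by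
  classical
  set Q : ((V ⊕ W) →₀ ℕ) → Prop := fun m => ∃ v ∈ m.support, v.isLeft with hQ
  have hcoeff : ∀ (s : Finset ((V ⊕ W) →₀ ℕ)), s ⊆ p.support →
      ∀ n, coeff n (∑ m ∈ s, (monomial m (coeff m p) : MvPolynomial (V ⊕ W) F)) =
        if n ∈ s then coeff n p else 0 := by
    intro s _ n
    rw [coeff_sum]
    simp only [coeff_monomial]
    exact Finset.sum_ite_eq' s n (fun m => coeff m p)
  refine ⟨∑ m ∈ p.support.filter Q, monomial m (coeff m p),
          ∑ m ∈ p.support.filter (fun m => ¬ Q m), monomial m (coeff m p), ?_, ?_, ?_⟩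
  · rw [Finset.sum_filter_add_sum_filter_not]
    exact p.as_sum
  · intro m hm
    rw [mem_support_iff, hcoeff _ (Finset.filter_subset _ _)] at hm
    by_cases hmem : m ∈ p.support.filter Q
    swap
    · simp [hmem] at hm
    rcases Finset.mem_filter.1 hmem with ⟨hmp, v, hv, hvl⟩
    have hdeg : (m.sum fun _ e => e) ≤ 1 := le_trans (le_totalDegree hmp) hp
    have huniq : ∀ u ∈ m.support, u = v := by
      intro u hu
      by_contra hne
      have h2 : m v + m u ≤ m.sum fun _ e => e := by
        rw [Finsupp.sum]
        have := Finset.sum_le_sum_of_subset (f := fun x => m x)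
          (show ({v, u} : Finset (V ⊕ W)) ⊆ m.support by
            intro x hx; rcases Finset.mem_insert.1 hx with rfl | hx
            · exact hv
            · rwa [Finset.mem_singleton.1 hx])
        rwa [Finset.sum_pair (fun h : v = u => hne h.symm)] at this
      have hv1 : 1 ≤ m v := Nat.one_le_iff_ne_zero.2 (Finsupp.mem_support_iff.1 hv)
      have hu1 : 1 ≤ m u := Nat.one_le_iff_ne_zero.2 (Finsupp.mem_support_iff.1 hu)
      omega
    intro u hu
    have := huniq u (Finset.mem_coe.1 hu)
    subst this
    rcases Sum.isLeft_iff.1 hvl with ⟨y, rfl⟩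
    exact ⟨y, rfl⟩
  · intro m hm
    rw [mem_support_iff, hcoeff _ (Finset.filter_subset _ _)] at hm
    by_cases hmem : m ∈ p.support.filter (fun m => ¬ Q m)
    swap
    · simp [hmem] at hm
    rcases Finset.mem_filter.1 hmem with ⟨hmp, hnq⟩
    intro u hu
    rcases u with y | z
    · exact absurd ⟨Sum.inl y, Finset.mem_coe.1 hu, rfl⟩ hnq
    · exact ⟨z, rfl⟩

lemma matrix_rank_add_le {m n : Type} [Fintype m] [Fintype n] (A B : Matrix m n F) :
    (A + B).rank ≤ A.rank + B.rank := by
  classical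
  rw [Matrix.rank, Matrix.rank, Matrix.rank, Matrix.mulVecLin_add]
  have hle : LinearMap.range (A.mulVecLin + B.mulVecLin) ≤
      LinearMap.range A.mulVecLin ⊔ LinearMap.range B.mulVecLin := by
    rintro x ⟨y, rfl⟩
    exact Submodule.mem_sup.2 ⟨A.mulVecLin y, ⟨y, rfl⟩, B.mulVecLin y, ⟨y, rfl⟩, rfl⟩
  exact le_trans (Submodule.finrank_mono hle)
    (Submodule.finrank_add_le_finrank_add_finrank _ _)

lemma matrix_rank_sum_le {ι m n : Type} [Fintype m] [Fintype n]
    (s : Finset ι) (M : ι → Matrix m n F) :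
    (∑ i ∈ s, M i).rank ≤ ∑ i ∈ s, (M i).rank := by
  classical
  induction s using Finset.cons_induction with
  | empty => simp
  | cons a s ha ih =>
    rw [Finset.sum_cons, Finset.sum_cons]
    exact le_trans (matrix_rank_add_le _ _) (add_le_add le_rfl ih)


lemma support_sum_inl (S : Finset V) :
    (↑(S.sum fun y => Finsupp.single (Sum.inl y : V ⊕ W) 1).support : Set (V ⊕ W)) ⊆
      Set.range Sum.inl := by
  intro v hv
  have hne := Finsupp.mem_support_iff.1 (Finset.mem_coe.1 hv)
  rcases v with y | z
  · exact ⟨y, rfl⟩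
  · exact absurd ((Finset.sum_apply' _).trans
      (Finset.sum_eq_zero fun y _ => by simp [Finsupp.single_apply])) hne

lemma support_sum_inr (T : Finset W) :
    (↑(T.sum fun z => Finsupp.single (Sum.inr z : V ⊕ W) 1).support : Set (V ⊕ W)) ⊆
      Set.range Sum.inr := by
  intro v hv
  have hne := Finsupp.mem_support_iff.1 (Finset.mem_coe.1 hv)
  rcases v with y | z
  · exact absurd ((Finset.sum_apply' _).trans
      (Finset.sum_eq_zero fun z _ => by simp [Finsupp.single_apply])) hne
  · exact ⟨z, rfl⟩

lemma prod_support_subset {ι : Type} (s : Finset ι) (q : ι → MvPolynomial (V ⊕ W) F)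
    (R : Set (V ⊕ W)) (hq : ∀ i ∈ s, ∀ m ∈ (q i).support, (↑m.support : Set (V ⊕ W)) ⊆ R) :
    ∀ m ∈ (∏ i ∈ s, q i).support, (↑m.support : Set (V ⊕ W)) ⊆ R := by
  classical
  induction s using Finset.cons_induction with
  | empty =>
    intro m hm
    rw [Finset.prod_empty] at hm
    have hm0 : m = 0 := by
      by_contra hne
      have := MvPolynomial.mem_support_iff.1 hm
      rw [MvPolynomial.coeff_one] at this
      simp [Ne.symm hne] at this
    simp [hm0]
  | cons a s ha ih =>
    intro m hm
    rw [Finset.prod_cons] at hm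
    rcases Finset.mem_add.1 (MvPolynomial.support_mul _ _ hm) with ⟨b, hb, c, hc, rfl⟩
    intro u hu
    rcases Finset.mem_union.1 (Finsupp.support_add (Finset.mem_coe.1 hu)) with hu' | hu'
    · exact hq a (Finset.mem_cons_self a s) b hb hu'
    · exact ih (fun i hi => hq i (Finset.mem_cons.2 (Or.inr hi))) c hc hu'

lemma rank_pd_le_one [DecidableEq V] [DecidableEq W] (Y : Finset V) (Z : Finset W)
    (g h : MvPolynomial (V ⊕ W) F)
    (hg : ∀ m ∈ g.support, (↑m.support : Set (V ⊕ W)) ⊆ Set.range Sum.inl)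
    (hh : ∀ m ∈ h.support, (↑m.support : Set (V ⊕ W)) ⊆ Set.range Sum.inr) :
    (pdMatrix F Y Z (g * h)).rank ≤ 1 := by
  have heq : pdMatrix F Y Z (g * h) = Matrix.vecMulVec
      (fun S : {S // S ∈ Y.powerset} =>
        coeff (S.1.sum fun y => Finsupp.single (Sum.inl y) 1) g)
      (fun T : {T // T ∈ Z.powerset} =>
        coeff (T.1.sum fun z => Finsupp.single (Sum.inr z) 1) h) := by
    ext S T
    exact coeff_mul_split g h hg hh _ _ (support_sum_inl S.1) (support_sum_inr T.1)
  rw [heq, Matrix.vecMulVec_eq (Fin 1)]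
  exact le_trans (Matrix.rank_mul_le_left _ _)
    (le_trans (Matrix.rank_le_card_width (Matrix.replicateCol (Fin 1)
      (fun S : {S // S ∈ Y.powerset} =>
        coeff (S.1.sum fun y => Finsupp.single (Sum.inl y) 1) g))) (by simp))

end Aux

/-- if `W_1,…,W_r` are pairwise disjoint subsets of `Y ∪ Z` and each
`L_i ∈ F[W_i]` has total degree at most `1`, then `f = L_1 ⋯ L_r` satisfies
`rank(M_{(Y,Z)}(f)) ≤ 2^r`. (The `Y`-side variables are the left summands of
`V ⊕ W`, the `Z`-side variables the right summands.) -/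
theorem stmt_17 (F : Type) [Field F] {V W : Type} [DecidableEq V] [DecidableEq W]
    (Y : Finset V) (Z : Finset W) (r : ℕ) (hr : 1 ≤ r)
    (Ws : Fin r → Finset (V ⊕ W))
    (hsub : ∀ i, ((Ws i : Finset (V ⊕ W)) : Set (V ⊕ W)) ⊆ (Sum.inl '' ↑Y) ∪ (Sum.inr '' ↑Z))
    (hdisj : ∀ i j, i ≠ j → Disjoint (Ws i) (Ws j))
    (L : Fin r → MvPolynomial (V ⊕ W) F)
    (hLsupp : ∀ i, L i ∈ MvPolynomial.supported F ↑(Ws i))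
    (hLdeg : ∀ i, (L i).totalDegree ≤ 1) :
    (pdMatrix F Y Z (∏ i, L i)).rank ≤ 2 ^ r := by
  classical
  choose g h hsplit hgs hhs using fun i => split_deg_one (L i) (hLdeg i)
  have hf : (∏ i, L i) = ∑ A ∈ (Finset.univ : Finset (Fin r)).powerset,
      (∏ i ∈ A, g i) * (∏ i ∈ Finset.univ \ A, h i) := by
    rw [← Finset.prod_add]
    exact Finset.prod_congr rfl fun i _ => hsplit i
  have hM : pdMatrix F Y Z (∏ i, L i) = ∑ A ∈ (Finset.univ : Finset (Fin r)).powerset,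
      pdMatrix F Y Z ((∏ i ∈ A, g i) * (∏ i ∈ Finset.univ \ A, h i)) := by
    rw [hf]
    ext S T
    simp only [Matrix.sum_apply, pdMatrix, coeff_sum]
  rw [hM]
  calc (∑ A ∈ (Finset.univ : Finset (Fin r)).powerset,
        pdMatrix F Y Z ((∏ i ∈ A, g i) * (∏ i ∈ Finset.univ \ A, h i))).rank
      ≤ ∑ A ∈ (Finset.univ : Finset (Fin r)).powerset,
        (pdMatrix F Y Z ((∏ i ∈ A, g i) * (∏ i ∈ Finset.univ \ A, h i))).rank :=
        matrix_rank_sum_le _ _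
    _ ≤ ∑ _A ∈ (Finset.univ : Finset (Fin r)).powerset, 1 := by
        refine Finset.sum_le_sum fun A _ => ?_
        exact rank_pd_le_one Y Z _ _
          (prod_support_subset A g _ fun i _ => hgs i)
          (prod_support_subset (Finset.univ \ A) h _ fun i _ => hhs i)
    _ = 2 ^ r := by simp
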